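/- lim_{p → ∞, p real} √p · (1/π) ∫_{-∞}^{∞} (sin²t / t²)^p dt = √(3/π). -/

import Mathlib

open MeasureTheory Real Filter

/-- `(sin t / t)^2`, extended continuously by `1` at `t = 0`. -/
noncomputable def sinc2 (t : ℝ) : ℝ := if t = 0 then 1 else Real.sin t ^ 2 / t ^ 2


lemma sinc2_nonneg (t : ℝ) : 0 ≤ sinc2 t := by
  unfold sinc2; split
  · norm_num
  · positivity

lemma sinc2_le_one (t : ℝ) : sinc2 t ≤ 1 := by
  unfold sinc2; split
  · exact le_refl 1
  · exact div_le_one_of_le₀ Real.sin_sq_le_sq (by positivity)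

lemma sinc2_neg (t : ℝ) : sinc2 (-t) = sinc2 t := by
  unfold sinc2; simp [neg_eq_zero]

lemma sinc2_measurable : Measurable sinc2 := by
  unfold sinc2
  exact Measurable.ite (measurableSet_eq_fun measurable_id measurable_const)
    measurable_const ((measurable_sin.pow_const 2).div (measurable_id.pow_const 2))

lemma sinc2_le_lorentz (t : ℝ) : sinc2 t ≤ 2 * (1 + t ^ 2)⁻¹ := by
  unfold sinc2; split
  · rename_i ht; subst ht; norm_num
  · rename_i ht
    have h1 : Real.sin t ^ 2 ≤ t ^ 2 := Real.sin_sq_le_sq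
    have h2 : Real.sin t ^ 2 ≤ 1 := Real.sin_sq_le_one t
    have h3 : (0:ℝ) < t ^ 2 := by positivity
    rw [div_le_iff₀ h3]
    have h4 : (0:ℝ) < 1 + t ^ 2 := by positivity
    rw [mul_assoc, inv_mul_eq_div, mul_div_assoc', le_div_iff₀ h4]
    nlinarith

lemma sinc2_abs {t : ℝ} (ht : t ≠ 0) : sinc2 t = Real.sin |t| ^ 2 / |t| ^ 2 := by
  have h1 : Real.sin |t| ^ 2 = Real.sin t ^ 2 := by
    rcases abs_cases t with ⟨h, _⟩ | ⟨h, _⟩ <;> rw [h] <;> simp [Real.sin_neg]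
  rw [h1, sq_abs]
  unfold sinc2
  rw [if_neg ht]

lemma sin_sq_taylor {x : ℝ} (h0 : 0 ≤ x) (h1 : x ≤ 1) :
    |Real.sin x ^ 2 - x ^ 2 + x ^ 4 / 3| ≤ x ^ 5 := by
  have hb := Real.sin_bound (x := x) (by rwa [abs_of_nonneg h0])
  rw [abs_of_nonneg h0, abs_le] at hb
  obtain ⟨hrl, hru⟩ := hb
  set r := Real.sin x - (x - x ^ 3 / 6) with hr
  have hx54 : x ^ 5 ≤ x ^ 4 := pow_le_pow_of_le_one h0 h1 (by norm_num)
  replace hrl : -(x ^ 4 * (5 / 96)) ≤ r := by nlinarith [pow_nonneg h0 4]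
  replace hru : r ≤ x ^ 4 * (5 / 96) := by nlinarith [pow_nonneg h0 4]
  have key : Real.sin x ^ 2 - x ^ 2 + x ^ 4 / 3
      = x ^ 6 / 36 + 2 * ((x - x ^ 3 / 6) * r) + r ^ 2 := by
    have : Real.sin x = (x - x ^ 3 / 6) + r := by rw [hr]; ring
    rw [this]; ring
  have e1 : x ^ 6 ≤ x ^ 5 := pow_le_pow_of_le_one h0 h1 (by norm_num)
  have e2 : x ^ 8 ≤ x ^ 5 := pow_le_pow_of_le_one h0 h1 (by norm_num)
  have ha0 : 0 ≤ x - x ^ 3 / 6 := by nlinarith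
  have hax : x - x ^ 3 / 6 ≤ x := by nlinarith
  have hb0 : (0:ℝ) ≤ x ^ 4 * (5 / 96) := by positivity
  have up : (x - x ^ 3 / 6) * r ≤ x * (x ^ 4 * (5 / 96)) :=
    le_trans (mul_le_mul_of_nonneg_left hru ha0) (mul_le_mul_of_nonneg_right hax hb0)
  have lo : -(x * (x ^ 4 * (5 / 96))) ≤ (x - x ^ 3 / 6) * r := by
    nlinarith [mul_le_mul_of_nonneg_left hrl ha0, mul_le_mul_of_nonneg_right hax hb0]
  have hr2 : r ^ 2 ≤ (x ^ 4 * (5 / 96)) ^ 2 := sq_le_sq' hrl hru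
  rw [key, abs_le]
  constructor <;> nlinarith [sq_nonneg r]

lemma sinc2_le_exp {t : ℝ} (ht : |t| ≤ 1) : sinc2 t ≤ Real.exp (-(11/96) * t ^ 2) := by
  rcases eq_or_ne t 0 with rfl | h
  · simp [sinc2]
  · set x := |t| with hx
    have hx0 : 0 < x := abs_pos.mpr h
    have hb := Real.sin_bound (x := x) (by rwa [abs_of_nonneg hx0.le])
    rw [abs_of_nonneg hx0.le, abs_le] at hb
    set u := x ^ 2 / 6 - x ^ 3 * (5 / 96) with hu
    have hu1 : 11 / 96 * x ^ 2 ≤ u := by rw [hu]; nlinarith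
    have hu0 : 0 ≤ u := le_trans (by positivity) hu1
    have hu2 : u ≤ 1 := by rw [hu]; nlinarith
    have hsle : Real.sin x ≤ x * (1 - u) := by rw [hu]; nlinarith [hb.2]
    have hs0 : 0 ≤ Real.sin x :=
      Real.sin_nonneg_of_nonneg_of_le_pi hx0.le (ht.trans (by linarith [Real.pi_gt_three]))
    have hpos : 0 ≤ x * (1 - u) := mul_nonneg hx0.le (by linarith)
    have hsq : Real.sin x ^ 2 ≤ x ^ 2 * (1 - u) ^ 2 := by nlinarith
    have h5 : sinc2 t ≤ (1 - u) ^ 2 := by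
      rw [sinc2_abs h, ← hx, div_le_iff₀ (by positivity)]
      nlinarith
    have h6 : (1 - u) ^ 2 ≤ 1 + (-(11/96) * t ^ 2) := by
      have hxx : t ^ 2 = x ^ 2 := (sq_abs t).symm
      rw [hxx]
      clear_value u
      nlinarith [mul_nonneg hu0 (by linarith : (0:ℝ) ≤ 1 - u)]
    calc sinc2 t ≤ 1 + (-(11/96) * t ^ 2) := h5.trans h6
      _ ≤ Real.exp (-(11/96) * t ^ 2) := by
          linarith [Real.add_one_le_exp (-(11/96) * t ^ 2)]

lemma abs_sin_sub_sin (x y : ℝ) : |Real.sin x - Real.sin y| ≤ |x - y| := by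
  rw [Real.sin_sub_sin, abs_mul, abs_mul, abs_two]
  calc 2 * |Real.sin ((x - y) / 2)| * |Real.cos ((x + y) / 2)|
      ≤ 2 * |(x - y) / 2| * 1 := by
        have h1 : |Real.sin ((x - y) / 2)| ≤ |(x - y) / 2| := Real.abs_sin_le_abs
        have h2 : |Real.cos ((x + y) / 2)| ≤ 1 := Real.abs_cos_le_one _
        apply mul_le_mul (by linarith) h2 (abs_nonneg _) (by positivity)
    _ = |x - y| := by rw [abs_div, abs_two]; ring

lemma sinc2_le_tail {t : ℝ} (ht : 1 ≤ |t|) : sinc2 t ≤ 0.9 := by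
  have h : t ≠ 0 := by
    intro h; rw [h] at ht; simp at ht; linarith
  rw [sinc2_abs h]
  set x := |t| with hx
  have hx1 : 1 ≤ x := ht
  rcases le_or_gt x 1.06 with hc | hc
  · have hsin1 : Real.sin 1 ≤ 85 / 96 := by
      have hb := Real.sin_bound (x := (1:ℝ)) (by norm_num)
      rw [abs_le] at hb
      norm_num at hb ⊢
      linarith [hb.2]
    have hlip := abs_sin_sub_sin x 1
    rw [abs_le] at hlip
    have habs : |x - 1| = x - 1 := abs_of_nonneg (by linarith)
    rw [habs] at hlip
    have hs : Real.sin x ≤ 0.946 := by linarith [hlip.2]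
    have hs0 : 0 ≤ Real.sin x :=
      Real.sin_nonneg_of_nonneg_of_le_pi (by linarith)
        (hc.trans (by linarith [Real.pi_gt_three]))
    rw [div_le_iff₀ (by positivity)]
    nlinarith
  · rw [div_le_iff₀ (by positivity)]
    nlinarith [Real.sin_sq_le_one x]

lemma sinc2_lt_one {t : ℝ} (h0 : t ≠ 0) (h1 : |t| ≤ 1) : sinc2 t < 1 := by
  rw [sinc2_abs h0]
  have hx0 : 0 < |t| := abs_pos.mpr h0
  have hs : Real.sin |t| < |t| := Real.sin_lt hx0
  have hs0 : 0 ≤ Real.sin |t| :=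
    Real.sin_nonneg_of_nonneg_of_le_pi hx0.le (h1.trans (by linarith [Real.pi_gt_three]))
  rw [div_lt_one (by positivity)]
  nlinarith

lemma g_tendsto :
    Tendsto (fun t : ℝ => (sinc2 t - 1) / t ^ 2) (nhdsWithin 0 {0}ᶜ) (nhds (-(1/3))) := by
  have hbound : ∀ t : ℝ, t ≠ 0 → |t| ≤ 1 →
      ‖(sinc2 t - 1) / t ^ 2 - (-(1/3))‖ ≤ |t| := by
    intro t h0 h1
    have hx0 : 0 < |t| := abs_pos.mpr h0
    have key := sin_sq_taylor (abs_nonneg t) h1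
    have h2 : Real.sin |t| ^ 2 = Real.sin t ^ 2 := by
      rcases abs_cases t with ⟨h, _⟩ | ⟨h, _⟩ <;> rw [h] <;> simp [Real.sin_neg]
    have h4 : |t| ^ 4 = t ^ 4 := by
      rw [← abs_pow]; exact abs_of_nonneg (by positivity)
    have h5 : |t| ^ 5 = |t| * t ^ 4 := by rw [← h4]; ring
    rw [h2, sq_abs, h4, h5] at key
    have hid : (sinc2 t - 1) / t ^ 2 - (-(1/3))
        = (Real.sin t ^ 2 - t ^ 2 + t ^ 4 / 3) / t ^ 4 := by
      unfold sinc2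
      rw [if_neg h0]
      field_simp
      ring
    rw [Real.norm_eq_abs, hid, abs_div, abs_of_nonneg (by positivity : (0:ℝ) ≤ t ^ 4),
      div_le_iff₀ (by positivity)]
    exact key
  have hev : ∀ᶠ t in nhdsWithin (0:ℝ) {0}ᶜ,
      ‖(sinc2 t - 1) / t ^ 2 - (-(1/3))‖ ≤ |t| := by
    have h2 : ∀ᶠ t in nhds (0:ℝ), |t| ≤ 1 := by
      filter_upwards [Metric.ball_mem_nhds (0:ℝ) one_pos] with t ht
      rw [Metric.mem_ball, Real.dist_eq, sub_zero] at ht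
      exact ht.le
    filter_upwards [nhdsWithin_le_nhds h2, self_mem_nhdsWithin] with t h1 h0
    exact hbound t h0 h1
  have habs : Tendsto (fun t : ℝ => |t|) (nhdsWithin (0:ℝ) {0}ᶜ) (nhds 0) := by
    have : Tendsto (fun t : ℝ => |t|) (nhds 0) (nhds 0) := by
      simpa using continuous_abs.tendsto (0:ℝ)
    exact this.mono_left nhdsWithin_le_nhds
  have h0 := squeeze_zero_norm' hev habs
  have := h0.add_const (-(1/3))
  simpa using this

lemma sinc2_tendsto_one : Tendsto sinc2 (nhdsWithin 0 {0}ᶜ) (nhds 1) := by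
  have h1 : Tendsto (fun t : ℝ => (sinc2 t - 1) / t ^ 2 * t ^ 2)
      (nhdsWithin 0 {0}ᶜ) (nhds 0) := by
    have h2 : Tendsto (fun t : ℝ => t ^ 2) (nhdsWithin (0:ℝ) {0}ᶜ) (nhds 0) := by
      have : Tendsto (fun t : ℝ => t ^ 2) (nhds (0:ℝ)) (nhds 0) := by
        simpa using (continuous_pow 2).tendsto (0:ℝ)
      exact this.mono_left nhdsWithin_le_nhds
    simpa using g_tendsto.mul h2
  have h3 : Tendsto (fun t : ℝ => sinc2 t - 1) (nhdsWithin 0 {0}ᶜ) (nhds 0) := by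
    apply h1.congr'
    filter_upwards [self_mem_nhdsWithin] with t ht
    have : (t:ℝ) ^ 2 ≠ 0 := pow_ne_zero 2 ht
    field_simp
    exact mul_div_cancel_right₀ _ ht
  have := h3.add_const 1
  simpa using this

lemma log_sinc2_tendsto :
    Tendsto (fun t : ℝ => Real.log (sinc2 t) / t ^ 2) (nhdsWithin 0 {0}ᶜ) (nhds (-(1/3))) := by
  have hslope : Tendsto (fun x : ℝ => Real.log x / (x - 1)) (nhdsWithin 1 {1}ᶜ) (nhds 1) := by
    have h := Real.hasDerivAt_log (one_ne_zero)
    rw [hasDerivAt_iff_tendsto_slope] at h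
    norm_num at h
    apply h.congr
    intro x
    simp [slope_def_field, Real.log_one]
  have hne : ∀ᶠ t in nhdsWithin (0:ℝ) {0}ᶜ, sinc2 t ≠ 1 := by
    have h2 : ∀ᶠ t in nhds (0:ℝ), |t| ≤ 1 := by
      filter_upwards [Metric.ball_mem_nhds (0:ℝ) one_pos] with t ht
      rw [Metric.mem_ball, Real.dist_eq, sub_zero] at ht
      exact ht.le
    filter_upwards [nhdsWithin_le_nhds h2, self_mem_nhdsWithin] with t h1 h0
    exact ne_of_lt (sinc2_lt_one h0 h1)
  have hcomp : Tendsto sinc2 (nhdsWithin 0 {0}ᶜ) (nhdsWithin 1 {1}ᶜ) := by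
    rw [tendsto_nhdsWithin_iff]
    exact ⟨sinc2_tendsto_one, hne⟩
  have h1 : Tendsto (fun t : ℝ => Real.log (sinc2 t) / (sinc2 t - 1))
      (nhdsWithin 0 {0}ᶜ) (nhds 1) := hslope.comp hcomp
  have h2 := h1.mul g_tendsto
  rw [one_mul] at h2
  apply h2.congr'
  filter_upwards [hne, self_mem_nhdsWithin] with t hne1 ht0
  have h3 : sinc2 t - 1 ≠ 0 := sub_ne_zero.mpr hne1
  have h4 : (t:ℝ) ^ 2 ≠ 0 := pow_ne_zero 2 ht0
  field_simp

lemma tendsto_sqrt_atTop : Tendsto Real.sqrt atTop atTop := by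
  have h := tendsto_rpow_atTop (y := (1/2 : ℝ)) (by norm_num)
  exact h.congr fun x => (Real.sqrt_eq_rpow x).symm

lemma pointwise_limit (s : ℝ) :
    Tendsto (fun p : ℝ => sinc2 (s / Real.sqrt p) ^ p) atTop
      (nhds (Real.exp (-(1/3) * s ^ 2))) := by
  rcases eq_or_ne s 0 with rfl | hs
  · have h : (fun p : ℝ => sinc2 (0 / Real.sqrt p) ^ p) = fun _ => 1 := by
      funext p
      rw [zero_div, show sinc2 0 = 1 by simp [sinc2], Real.one_rpow]
    rw [h, show Real.exp (-(1/3) * (0:ℝ) ^ 2) = 1 by norm_num]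
    exact tendsto_const_nhds
  · have htt : Tendsto (fun p : ℝ => s / Real.sqrt p) atTop (nhdsWithin 0 {0}ᶜ) := by
      rw [tendsto_nhdsWithin_iff]
      constructor
      · exact tendsto_const_nhds.div_atTop _root_.tendsto_sqrt_atTop
      · filter_upwards [eventually_gt_atTop (0:ℝ)] with p hp
        have h1 : Real.sqrt p ≠ 0 := ne_of_gt (Real.sqrt_pos.mpr hp)
        simp only [Set.mem_compl_iff, Set.mem_singleton_iff]
        exact div_ne_zero hs h1
    have h1 := log_sinc2_tendsto.comp htt
    have h2 := h1.const_mul (s ^ 2)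
    have hS : Tendsto (fun p : ℝ => sinc2 (s / Real.sqrt p)) atTop (nhds 1) :=
      sinc2_tendsto_one.comp htt
    have hpos : ∀ᶠ p in atTop, 0 < sinc2 (s / Real.sqrt p) :=
      hS.eventually (eventually_gt_nhds zero_lt_one)
    have key : ∀ᶠ p in atTop, sinc2 (s / Real.sqrt p) ^ p
        = Real.exp (s ^ 2 * (Real.log (sinc2 (s / Real.sqrt p)) / (s / Real.sqrt p) ^ 2)) := by
      filter_upwards [hpos, eventually_gt_atTop (0:ℝ)] with p hp hp0
      rw [Real.rpow_def_of_pos hp]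
      congr 1
      have hsq : (s / Real.sqrt p) ^ 2 = s ^ 2 / p := by
        rw [div_pow, Real.sq_sqrt hp0.le]
      rw [hsq]
      have hps : s ^ 2 ≠ 0 := pow_ne_zero 2 hs
      field_simp
    have hfinal := (Real.continuous_exp.tendsto _).comp h2
    simp only [Function.comp] at hfinal h1 h2
    rw [show s ^ 2 * -(1/3) = -(1/3) * s ^ 2 by ring] at hfinal
    exact Tendsto.congr' (EventuallyEq.symm key) hfinal

lemma sinc2_rpow_measurable {p : ℝ} (hp : 0 ≤ p) : Measurable fun t => sinc2 t ^ p :=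
  (Real.continuous_rpow_const hp).measurable.comp sinc2_measurable

lemma sinc2_rpow_le {p : ℝ} (hp : 1 ≤ p) (t : ℝ) : sinc2 t ^ p ≤ 2 * (1 + t ^ 2)⁻¹ :=
  calc sinc2 t ^ p ≤ sinc2 t ^ (1:ℝ) :=
        Real.rpow_le_rpow_of_exponent_ge' (sinc2_nonneg t) (sinc2_le_one t) zero_le_one hp
    _ = sinc2 t := Real.rpow_one _
    _ ≤ _ := sinc2_le_lorentz t

lemma integrable_sinc2_rpow {p : ℝ} (hp : 1 ≤ p) : Integrable fun t : ℝ => sinc2 t ^ p := by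
  apply Integrable.mono' (integrable_inv_one_add_sq.const_mul 2)
    (sinc2_rpow_measurable (by linarith)).aestronglyMeasurable
  filter_upwards with t
  rw [Real.norm_eq_abs, abs_of_nonneg (Real.rpow_nonneg (sinc2_nonneg t) p)]
  exact sinc2_rpow_le hp t

lemma tail_pointwise {p : ℝ} (hp : 1 ≤ p) {t : ℝ} (ht : 1 ≤ |t|) :
    sinc2 t ^ p ≤ 0.9 ^ (p - 1) * (2 * (1 + t ^ 2)⁻¹) := by
  have h1 : sinc2 t ^ p = sinc2 t ^ (p - 1) * sinc2 t ^ (1:ℝ) := by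
    rw [← Real.rpow_add_of_nonneg (sinc2_nonneg t) (by linarith) zero_le_one]
    norm_num
  rw [h1]
  apply mul_le_mul
  · exact Real.rpow_le_rpow (sinc2_nonneg t) (sinc2_le_tail ht) (by linarith)
  · rw [Real.rpow_one]; exact sinc2_le_lorentz t
  · exact Real.rpow_nonneg (sinc2_nonneg t) 1
  · exact Real.rpow_nonneg (by norm_num) _

lemma compl_Icc_abs {t : ℝ} (ht : t ∈ (Set.Icc (-1:ℝ) 1)ᶜ) : 1 ≤ |t| := by
  simp only [Set.mem_compl_iff, Set.mem_Icc, not_and_or, not_le] at ht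
  rcases ht with h | h
  · rw [abs_of_nonpos (by linarith)]; linarith
  · rw [abs_of_nonneg (by linarith)]; linarith

lemma tail_bound {p : ℝ} (hp : 1 ≤ p) :
    ∫ t in (Set.Icc (-1:ℝ) 1)ᶜ, sinc2 t ^ p ≤ 0.9 ^ (p - 1) * (2 * π) := by
  have hmeas : MeasurableSet (Set.Icc (-1:ℝ) 1)ᶜ := measurableSet_Icc.compl
  have hint1 : IntegrableOn (fun t : ℝ => sinc2 t ^ p) (Set.Icc (-1:ℝ) 1)ᶜ :=
    (integrable_sinc2_rpow hp).integrableOn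
  have hint2 : Integrable (fun t : ℝ => 0.9 ^ (p - 1) * (2 * (1 + t ^ 2)⁻¹)) :=
    (integrable_inv_one_add_sq.const_mul 2).const_mul _
  calc ∫ t in (Set.Icc (-1:ℝ) 1)ᶜ, sinc2 t ^ p
      ≤ ∫ t in (Set.Icc (-1:ℝ) 1)ᶜ, 0.9 ^ (p - 1) * (2 * (1 + t ^ 2)⁻¹) :=
        setIntegral_mono_on hint1 hint2.integrableOn hmeas
          (fun t ht => tail_pointwise hp (compl_Icc_abs ht))
    _ ≤ ∫ t : ℝ, 0.9 ^ (p - 1) * (2 * (1 + t ^ 2)⁻¹) := by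
        apply setIntegral_le_integral hint2
        filter_upwards with t
        positivity
    _ = 0.9 ^ (p - 1) * (2 * π) := by
        rw [MeasureTheory.integral_const_mul, MeasureTheory.integral_const_mul, integral_univ_inv_one_add_sq]

noncomputable def F (p : ℝ) (s : ℝ) : ℝ :=
  (Set.Icc (-1:ℝ) 1).indicator (fun t => sinc2 t ^ p) (s / Real.sqrt p)

lemma F_meas {p : ℝ} (hp : 0 ≤ p) : AEStronglyMeasurable (F p) volume := by
  apply Measurable.aestronglyMeasurable
  exact ((sinc2_rpow_measurable hp).indicator measurableSet_Icc).comp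
    (measurable_id.div_const _)

lemma F_bound {p : ℝ} (hp : 1 ≤ p) (s : ℝ) : ‖F p s‖ ≤ Real.exp (-(11/96) * s ^ 2) := by
  have hp0 : (0:ℝ) < p := by linarith
  unfold F
  by_cases hmem : s / Real.sqrt p ∈ Set.Icc (-1:ℝ) 1
  · rw [Set.indicator_of_mem hmem, Real.norm_eq_abs,
      abs_of_nonneg (Real.rpow_nonneg (sinc2_nonneg _) _)]
    have habs : |s / Real.sqrt p| ≤ 1 := abs_le.mpr ⟨hmem.1, hmem.2⟩
    calc sinc2 (s / Real.sqrt p) ^ p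
        ≤ Real.exp (-(11/96) * (s / Real.sqrt p) ^ 2) ^ p :=
          Real.rpow_le_rpow (sinc2_nonneg _) (sinc2_le_exp habs) (by linarith)
      _ = Real.exp (-(11/96) * (s / Real.sqrt p) ^ 2 * p) := (Real.exp_mul _ p).symm
      _ = Real.exp (-(11/96) * s ^ 2) := by
          congr 1
          rw [div_pow, Real.sq_sqrt hp0.le]
          field_simp
  · rw [Set.indicator_of_notMem hmem]
    simpa using (Real.exp_pos _).le

lemma F_lim (s : ℝ) : Tendsto (fun p : ℝ => F p s) atTop (nhds (Real.exp (-(1/3) * s ^ 2))) := by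
  apply (pointwise_limit s).congr'
  filter_upwards [eventually_ge_atTop (max 1 (s ^ 2))] with p hple
  have hp1 : (1:ℝ) ≤ p := le_trans (le_max_left _ _) hple
  have hps : s ^ 2 ≤ p := le_trans (le_max_right _ _) hple
  have hsp : 0 < Real.sqrt p := Real.sqrt_pos.mpr (by linarith)
  have hmem : s / Real.sqrt p ∈ Set.Icc (-1:ℝ) 1 := by
    rw [Set.mem_Icc, ← abs_le, abs_div, abs_of_nonneg hsp.le, div_le_one hsp]
    calc |s| = Real.sqrt (s ^ 2) := (Real.sqrt_sq_eq_abs s).symm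
      _ ≤ Real.sqrt p := Real.sqrt_le_sqrt hps
  rw [F, Set.indicator_of_mem hmem]

lemma main_tendsto :
    Tendsto (fun p : ℝ => Real.sqrt p * ∫ t in Set.Icc (-1:ℝ) 1, sinc2 t ^ p) atTop
      (nhds (Real.sqrt (3 * π))) := by
  have hDCT : Tendsto (fun p : ℝ => ∫ s : ℝ, F p s) atTop
      (nhds (∫ s : ℝ, Real.exp (-(1/3) * s ^ 2))) := by
    apply tendsto_integral_filter_of_dominated_convergence
      (fun s => Real.exp (-(11/96) * s ^ 2))
    · filter_upwards [eventually_ge_atTop (1:ℝ)] with p hp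
      exact F_meas (by linarith)
    · filter_upwards [eventually_ge_atTop (1:ℝ)] with p hp
      filter_upwards with s
      exact F_bound hp s
    · exact integrable_exp_neg_mul_sq (by norm_num)
    · filter_upwards with s
      exact F_lim s
  have hgauss : ∫ s : ℝ, Real.exp (-(1/3) * s ^ 2) = Real.sqrt (3 * π) := by
    rw [show (fun s : ℝ => Real.exp (-(1/3) * s ^ 2)) = fun s : ℝ => Real.exp (-((1:ℝ)/3) * s ^ 2)
      by norm_num]
    rw [integral_gaussian ((1:ℝ)/3)]
    congr 1
    field_simp
  rw [hgauss] at hDCT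
  apply hDCT.congr'
  filter_upwards [eventually_gt_atTop (0:ℝ)] with p hp
  have hsp : 0 < Real.sqrt p := Real.sqrt_pos.mpr hp
  have := MeasureTheory.Measure.integral_comp_div
    (fun t : ℝ => (Set.Icc (-1:ℝ) 1).indicator (fun u => sinc2 u ^ p) t) (Real.sqrt p)
  rw [abs_of_nonneg hsp.le, smul_eq_mul] at this
  calc ∫ s : ℝ, F p s = Real.sqrt p * ∫ t : ℝ,
        (Set.Icc (-1:ℝ) 1).indicator (fun u => sinc2 u ^ p) t := this
    _ = Real.sqrt p * ∫ t in Set.Icc (-1:ℝ) 1, sinc2 t ^ p := by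
        rw [integral_indicator measurableSet_Icc]

lemma tail_tendsto :
    Tendsto (fun p : ℝ => Real.sqrt p * ∫ t in (Set.Icc (-1:ℝ) 1)ᶜ, sinc2 t ^ p) atTop
      (nhds 0) := by
  have hupper : Tendsto (fun p : ℝ => Real.sqrt p * (0.9 ^ (p - 1) * (2 * π))) atTop
      (nhds 0) := by
    have hb : 0 < -Real.log 0.9 := by
      have := Real.log_neg (by norm_num : (0:ℝ) < 0.9) (by norm_num)
      linarith
    have h := tendsto_rpow_mul_exp_neg_mul_atTop_nhds_zero (1/2) (-Real.log 0.9) hb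
    have h2 := h.const_mul ((2 * π) / 0.9)
    rw [mul_zero] at h2
    apply h2.congr'
    filter_upwards [eventually_gt_atTop (0:ℝ)] with p hp
    have e1 : (0.9:ℝ) ^ (p - 1) = Real.exp (-(-Real.log 0.9 * p)) * (0.9:ℝ)⁻¹ := by
      rw [Real.rpow_def_of_pos (show (0:ℝ) < 0.9 by norm_num),
        show Real.log 0.9 * (p - 1) = -(-Real.log 0.9 * p) + -Real.log 0.9 by ring,
        Real.exp_add]
      congr 1
      rw [Real.exp_neg, Real.exp_log (show (0:ℝ) < 0.9 by norm_num)]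
    rw [Real.sqrt_eq_rpow, e1]
    ring
  apply tendsto_of_tendsto_of_tendsto_of_le_of_le' tendsto_const_nhds hupper
  · filter_upwards [eventually_ge_atTop (1:ℝ)] with p hp
    exact mul_nonneg (Real.sqrt_nonneg p) (setIntegral_nonneg measurableSet_Icc.compl
      fun t _ => Real.rpow_nonneg (sinc2_nonneg t) p)
  · filter_upwards [eventually_ge_atTop (1:ℝ)] with p hp
    exact mul_le_mul_of_nonneg_left (tail_bound hp) (Real.sqrt_nonneg p)

theorem sinc_integral_asymptotics_real :
    Filter.Tendsto (fun p : ℝ => Real.sqrt p * ((1 / π) * ∫ t : ℝ, sinc2 t ^ p))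
      Filter.atTop (nhds (Real.sqrt (3 / π))) := by
  have hπ : (0:ℝ) < π := Real.pi_pos
  have hcomb := (main_tendsto.add tail_tendsto).const_mul (1/π)
  rw [add_zero] at hcomb
  have hval : 1/π * Real.sqrt (3*π) = Real.sqrt (3/π) := by
    have h3 : (3:ℝ)/π = (3*π)/π^2 := by field_simp
    rw [h3, Real.sqrt_div (by positivity) (π^2), Real.sqrt_sq hπ.le]
    ring
  rw [hval] at hcomb
  apply hcomb.congr'
  filter_upwards [eventually_ge_atTop (1:ℝ)] with p hp
  rw [← MeasureTheory.integral_add_compl measurableSet_Icc (integrable_sinc2_rpow hp)]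
  ring
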